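/- Let n be even, let 𝐗 = (X_{rj})_{1≤r,j≤n} be the switch variables of the standard lightbulb process on n bulbs, and fix i ∈ {1,…,n}. Define a random array 𝐗^i as follows: if X_i = 1 (bulb i is on at the terminal time) set 𝐗^i = 𝐗; otherwise, conditionally on 𝐗, choose J uniformly from the set {j : X_{n/2,j} = 1 − X_{n/2,i}} and let 𝐗^i be 𝐗 with the two entries X_{n/2,i} and X_{n/2,J} interchanged (all other entries unchanged). Then the distribution of 𝐗^i equals the conditional distribution of 𝐗 given X_i = 1. -/

import Mathlib

open MeasureTheory ProbabilityTheory Finset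

/-- The arrays of switch variables having exactly `s r` switches in stage `r`. -/
def validArrays (n k : ℕ) (s : Fin k → ℕ) : Finset (Fin k → Fin n → Bool) :=
  Finset.univ.filter (fun e => ∀ r, (Finset.univ.filter (fun j => e r j = true)).card = s r)

/-- Terminal state of bulb `j` (all bulbs initially off). -/
def bulbOn {n k : ℕ} (e : Fin k → Fin n → Bool) (j : Fin n) : Bool :=
  decide ((Finset.univ.filter (fun r => e r j = true)).card % 2 = 1)

/-- The standard switch pattern `𝐧 = (1,…,n)`: stage `r` toggles `r+1` bulbs for `r : Fin n`. -/
def stdPattern (n : ℕ) : Fin n → ℕ := fun r => (r : ℕ) + 1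

namespace LBAux
variable {n : ℕ}

def swapRow (half i j : Fin n) (f : Fin n → Fin n → Bool) : Fin n → Fin n → Bool :=
  fun r j' => if r = half then
    (if j' = i then f half j else if j' = j then f half i else f half j')
  else f r j'

lemma swapRow_apply (half i j : Fin n) (f : Fin n → Fin n → Bool) (r j' : Fin n) :
    swapRow half i j f r j' = if r = half then f half (Equiv.swap i j j') else f r j' := by
  rw [Equiv.swap_apply_def, swapRow]
  by_cases h1 : j' = i
  · simp [h1]
  · by_cases h2 : j' = j
    · by_cases h3 : j = i <;> simp [h1, h2, h3]
    · simp [h1, h2]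

lemma swapRow_invol (half i j : Fin n) (f : Fin n → Fin n → Bool) :
    swapRow half i j (swapRow half i j f) = f := by
  funext r j'
  by_cases h : r = half
  · subst h
    rw [swapRow_apply, if_pos rfl, swapRow_apply, if_pos rfl, Equiv.swap_apply_self]
  · rw [swapRow_apply, if_neg h, swapRow_apply, if_neg h]

lemma mem_validArrays {s : Fin n → ℕ} {e : Fin n → Fin n → Bool} :
    e ∈ validArrays n n s ↔ ∀ r, (Finset.univ.filter (fun j => e r j = true)).card = s r := by
  simp [validArrays]

lemma swapRow_mem (half i j : Fin n) {s : Fin n → ℕ} {e : Fin n → Fin n → Bool}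
    (he : e ∈ validArrays n n s) : swapRow half i j e ∈ validArrays n n s := by
  rw [mem_validArrays] at he ⊢
  intro r
  by_cases h : r = half
  · subst h
    rw [← he r]
    apply Finset.card_nbij' (Equiv.swap i j) (Equiv.swap i j)
    · intro a ha
      simp only [mem_coe, mem_filter, mem_univ, true_and, swapRow_apply, if_true, if_pos rfl,
        eq_self_iff_true, Equiv.swap_apply_self] at ha ⊢
      exact ha
    · intro a ha
      simp only [mem_coe, mem_filter, mem_univ, true_and, swapRow_apply, if_true, if_pos rfl,
        eq_self_iff_true] at ha ⊢
      rwa [Equiv.swap_apply_self]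
    · intro a _; exact Equiv.swap_apply_self i j a
    · intro a _; exact Equiv.swap_apply_self i j a
  · rw [← he r]
    apply Finset.card_bij (fun a _ => a) <;> simp [swapRow_apply, h]

/-- parity flip lemma -/
lemma bulbOn_flip {half i : Fin n} {f g : Fin n → Fin n → Bool}
    (h1 : ∀ r, r ≠ half → g r i = f r i) (h2 : g half i = ! f half i) :
    bulbOn g i = ! bulbOn f i := by
  unfold bulbOn
  rw [Finset.card_filter, Finset.card_filter,
    ← Finset.sum_erase_add univ _ (Finset.mem_univ half),
    ← Finset.sum_erase_add univ _ (Finset.mem_univ half)]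
  have hs : ∑ x ∈ univ.erase half, (if g x i = true then 1 else 0)
      = ∑ x ∈ univ.erase half, (if f x i = true then 1 else 0) := by
    apply Finset.sum_congr rfl
    intro x hx
    rw [h1 x (Finset.ne_of_mem_erase hx)]
  rw [hs]
  rw [← decide_not, decide_eq_decide]
  set S := ∑ x ∈ univ.erase half, (if f x i = true then 1 else 0) with hS
  cases hfi : f half i <;> simp [hfi, h2] at * <;> omega

end LBAux

namespace LBAux
variable {n : ℕ}

lemma bulbOn_swapRow {half i j : Fin n} (hji : j ≠ i) (f : Fin n → Fin n → Bool)
    (hopp : f half j = ! f half i) :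
    bulbOn (swapRow half i j f) i = ! bulbOn f i := by
  apply bulbOn_flip
  · intro r hr; rw [swapRow_apply, if_neg hr]
  · rw [swapRow_apply, if_pos rfl, Equiv.swap_apply_left, hopp]

/-- count of a given value in row `half` of a valid array -/
lemma count_row {e : Fin n → Fin n → Bool} (hne : Even n) {half : Fin n}
    (hhalf : (half : ℕ) + 1 = n / 2)
    (he : e ∈ validArrays n n (stdPattern n)) (b : Bool) :
    (Finset.univ.filter (fun j => e half j = b)).card = n / 2 := by
  have htrue := (mem_validArrays.mp he) half
  rw [stdPattern, hhalf] at htrue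
  cases b
  · have hsplit := Finset.card_filter_add_card_filter_not
      (s := (Finset.univ : Finset (Fin n))) (fun j => e half j = true)
    rw [Finset.card_univ, Fintype.card_fin, htrue] at hsplit
    have h2 : n % 2 = 0 := Nat.even_iff.mp hne
    have : (Finset.univ.filter (fun j => ¬ e half j = true)).card = n / 2 := by omega
    rw [← this]
    apply Finset.card_bij (fun a _ => a) <;> simp
  · exact htrue

def negRow (half : Fin n) (e : Fin n → Fin n → Bool) : Fin n → Fin n → Bool :=
  fun r j => if r = half then !(e r j) else e r j

lemma negRow_mem (hne : Even n) {half : Fin n} (hhalf : (half : ℕ) + 1 = n / 2)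
    {e : Fin n → Fin n → Bool} (he : e ∈ validArrays n n (stdPattern n)) :
    negRow half e ∈ validArrays n n (stdPattern n) := by
  rw [mem_validArrays]
  intro r
  by_cases h : r = half
  · subst h
    have : (Finset.univ.filter (fun j => negRow r e r j = true)).card
        = (Finset.univ.filter (fun j => e r j = false)).card := by
      apply Finset.card_bij (fun a _ => a) <;> simp [negRow]
    rw [this, count_row hne hhalf he false, stdPattern, hhalf]
  · rw [← (mem_validArrays.mp he) r]
    apply Finset.card_bij (fun a _ => a) <;> simp [negRow, h]

lemma negRow_bulbOn (half i : Fin n) (e : Fin n → Fin n → Bool) :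
    bulbOn (negRow half e) i = ! bulbOn e i := by
  apply bulbOn_flip (half := half)
  · intro r hr; simp [negRow, hr]
  · simp [negRow]

lemma card_true_half (hne : Even n) {half : Fin n} (hhalf : (half : ℕ) + 1 = n / 2)
    (i : Fin n) :
    ((validArrays n n (stdPattern n)).filter (fun e => bulbOn e i = true)).card * 2
      = (validArrays n n (stdPattern n)).card := by
  have hcard : ((validArrays n n (stdPattern n)).filter (fun e => bulbOn e i = true)).card
      = ((validArrays n n (stdPattern n)).filter (fun e => ¬ bulbOn e i = true)).card := by
    apply Finset.card_nbij' (negRow half) (negRow half)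
    · intro a ha
      rw [Finset.mem_coe, Finset.mem_filter] at ha ⊢
      refine ⟨negRow_mem hne hhalf ha.1, ?_⟩
      rw [negRow_bulbOn, ha.2]; simp
    · intro a ha
      rw [Finset.mem_coe, Finset.mem_filter] at ha ⊢
      refine ⟨negRow_mem hne hhalf ha.1, ?_⟩
      rw [negRow_bulbOn]
      simp only [Bool.not_eq_true] at ha
      rw [ha.2]; simp
    · intro a _
      funext r j; simp only [negRow]; by_cases h : r = half <;> simp [h]
    · intro a _
      funext r j; simp only [negRow]; by_cases h : r = half <;> simp [h]
  have hsplit := Finset.card_filter_add_card_filter_not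
      (s := validArrays n n (stdPattern n)) (fun e => bulbOn e i = true)
  omega

end LBAux

namespace LBAux

lemma measure_eq_sum_fiber {Ω β : Type*} [MeasurableSpace Ω] [Fintype β] [MeasurableSpace β]
    [MeasurableSingletonClass β] (P : MeasureTheory.Measure Ω) (X : Ω → β) (hX : Measurable X)
    {s : Set Ω} (hs : MeasurableSet s) :
    P s = ∑ b : β, P (s ∩ X ⁻¹' {b}) := by
  rw [← MeasureTheory.measure_biUnion_finset]
  · congr 1
    ext ω
    simp
  · intro b _ b' _ hbb'
    simp only [Function.onFun]
    rw [Set.disjoint_left]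
    rintro ω ⟨-, h1⟩ ⟨-, h2⟩
    exact hbb' (h1.symm.trans h2)
  · intro b _
    exact hs.inter (hX (measurableSet_singleton b))

def tmap {n : ℕ} (half i : Fin n) (f : Fin n → Fin n → Bool) (j : Fin n) :
    Fin n → Fin n → Bool :=
  if bulbOn f i then f else swapRow half i j f

end LBAux

open LBAux in
example {n : ℕ} {Ω : Type} [MeasurableSpace Ω] (P : Measure Ω)
    (A : Ω → (Fin n → Fin n → Bool)) (i : Fin n) (half : Fin n) (J : Ω → Fin n) :
    (fun ω =>
      if bulbOn (A ω) i then A ω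
      else fun r j' =>
        if r = half then
          (if j' = i then A ω half (J ω)
           else if j' = J ω then A ω half i
           else A ω half j')
        else A ω r j') = fun ω => tmap half i (A ω) (J ω) := rfl

namespace LBAux
variable {n : ℕ}

lemma tmap_pos {half i : Fin n} {f : Fin n → Fin n → Bool} (j : Fin n)
    (h : bulbOn f i = true) : tmap half i f j = f := by
  rw [tmap, if_pos h]

lemma tmap_neg {half i : Fin n} {f : Fin n → Fin n → Bool} (j : Fin n)
    (h : bulbOn f i = false) : tmap half i f j = swapRow half i j f := by
  rw [tmap, h]; simp

end LBAux

open LBAux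

set_option maxHeartbeats 1000000 in
theorem lightbulb_conditioned_array_even {n : ℕ} (hne : Even n) (hpos : 0 < n)
    {Ω : Type} [MeasurableSpace Ω] (P : Measure Ω) [IsProbabilityMeasure P]
    (A : Ω → (Fin n → Fin n → Bool)) (hA : Measurable A)
    (hdist : ∀ e, P {ω | A ω = e} =
      if e ∈ validArrays n n (stdPattern n)
      then ((validArrays n n (stdPattern n)).card : ENNReal)⁻¹ else 0)
    (i : Fin n) (half : Fin n) (hhalf : (half : ℕ) + 1 = n / 2)
    (J : Ω → Fin n) (hJ : Measurable J)
    (hJdist : ∀ e (j : Fin n),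
      P {ω | A ω = e ∧ J ω = j}
        = P {ω | A ω = e} *
          (if e half j = !(e half i)
           then ((Finset.univ.filter (fun j' => e half j' = !(e half i))).card : ENNReal)⁻¹
           else 0)) :
    Measure.map
      (fun ω =>
        if bulbOn (A ω) i then A ω
        else fun r j' =>
          if r = half then
            (if j' = i then A ω half (J ω)
             else if j' = J ω then A ω half i
             else A ω half j')
          else A ω r j') P
    = Measure.map A (P[|{ω | bulbOn (A ω) i = true}]) := by
  classical
  have hfun : (fun ω =>
        if bulbOn (A ω) i then A ω
        else fun r j' =>
          if r = half then
            (if j' = i then A ω half (J ω)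
             else if j' = J ω then A ω half i
             else A ω half j')
          else A ω r j') = fun ω => tmap half i (A ω) (J ω) := rfl
  rw [hfun]
  have hmod2 : n % 2 = 0 := Nat.even_iff.mp hne
  have hn2pos : 0 < n / 2 := by omega
  set V := validArrays n n (stdPattern n) with hVdef
  set N := (V.card : ENNReal) with hNdef
  set n2 : ENNReal := ((n / 2 : ℕ) : ENNReal) with hn2def
  have hn2ne : n2 ≠ 0 := by
    rw [hn2def]
    exact Nat.cast_ne_zero.mpr (by omega)
  have hn2top : n2 ≠ ⊤ := by rw [hn2def]; exact ENNReal.natCast_ne_top _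
  -- measurability
  have hT : Measurable (fun ω => tmap half i (A ω) (J ω)) :=
    (measurable_of_countable
      (fun p : (Fin n → Fin n → Bool) × Fin n => tmap half i p.1 p.2)).comp (hA.prodMk hJ)
  have hSmeas : MeasurableSet {ω | bulbOn (A ω) i = true} := by
    have : {ω | bulbOn (A ω) i = true} = A ⁻¹' {e | bulbOn e i = true} := rfl
    rw [this]
    exact hA ((Set.to_countable _).measurableSet)
  have hPA : ∀ f, P (A ⁻¹' {f}) = if f ∈ V then N⁻¹ else 0 := fun f => hdist f
  have hNtop : N ≠ ⊤ := by rw [hNdef]; exact ENNReal.natCast_ne_top _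
  have hNne : N ≠ 0 := by
    intro h0
    have hV0 : V = ∅ := Finset.card_eq_zero.mp (Nat.cast_eq_zero.mp (hNdef ▸ h0))
    have h1 := measure_univ (μ := P)
    rw [measure_eq_sum_fiber P A hA MeasurableSet.univ] at h1
    simp only [Set.univ_inter, hPA, hV0, Finset.notMem_empty, if_false,
      Finset.sum_const_zero] at h1
    exact zero_ne_one h1
  -- half of valid arrays have bulb i on
  set M : ENNReal := ((V.filter (fun e => bulbOn e i = true)).card : ENNReal) with hMdef
  have hM2 : N = M * 2 := by
    rw [hNdef, hMdef, ← (card_true_half hne hhalf i)]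
    push_cast
    ring
  have hMne : M ≠ 0 := by
    intro h0
    rw [h0, zero_mul] at hM2
    exact hNne hM2
  have hMtop : M ≠ ⊤ := by rw [hMdef]; exact ENNReal.natCast_ne_top _
  -- the capped sets
  have hcap : ∀ f, {ω | bulbOn (A ω) i = true} ∩ A ⁻¹' {f}
      = if bulbOn f i = true then A ⁻¹' {f} else ∅ := by
    intro f
    by_cases h : bulbOn f i = true
    · rw [if_pos h]
      ext ω
      simp only [Set.mem_inter_iff, Set.mem_setOf_eq, Set.mem_preimage, Set.mem_singleton_iff]
      constructor
      · rintro ⟨-, h2⟩; exact h2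
      · intro h2; exact ⟨by rw [h2]; exact h, h2⟩
    · rw [if_neg h]
      ext ω
      simp only [Set.mem_inter_iff, Set.mem_setOf_eq, Set.mem_preimage, Set.mem_singleton_iff,
        Set.mem_empty_iff_false, iff_false, not_and]
      intro h1 h2
      rw [h2] at h1
      exact h h1
  -- P(S) = 1/2
  have hPS : P {ω | bulbOn (A ω) i = true} = 2⁻¹ := by
    rw [measure_eq_sum_fiber P A hA hSmeas]
    simp only [hcap, apply_ite P, measure_empty, hPA]
    have hite : ∀ f, (if bulbOn f i = true then (if f ∈ V then N⁻¹ else 0) else 0)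
        = if f ∈ V.filter (fun e => bulbOn e i = true) then N⁻¹ else 0 := by
      intro f
      by_cases h1 : bulbOn f i = true <;> by_cases h2 : f ∈ V <;>
        simp [h1, h2, Finset.mem_filter]
    simp only [hite]
    rw [Finset.sum_ite_mem, Finset.univ_inter, Finset.sum_const, nsmul_eq_mul, ← hMdef,
      hM2, ENNReal.mul_inv (Or.inl hMne) (Or.inl hMtop), ← mul_assoc,
      ENNReal.mul_inv_cancel hMne hMtop, one_mul]
  -- probabilities of joint events
  have hPAJ : ∀ f (j : Fin n), f ∈ V → P {ω | A ω = f ∧ J ω = j}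
      = N⁻¹ * (if f half j = !(f half i) then n2⁻¹ else 0) := by
    intro f j hf
    rw [hJdist f j, hdist f, if_pos hf, count_row hne hhalf hf, ← hn2def]
  have hPAJ0 : ∀ f (j : Fin n), f ∉ V → P {ω | A ω = f ∧ J ω = j} = 0 := by
    intro f j hf
    rw [hJdist f j, hdist f, if_neg hf, zero_mul]
  -- ext over singletons
  rw [Measure.ext_iff_singleton]
  intro e
  rw [Measure.map_apply hT (measurableSet_singleton e),
    Measure.map_apply hA (measurableSet_singleton e),
    cond_apply hSmeas, hcap e, apply_ite P, measure_empty, hPA e, hPS, inv_inv]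
  rw [measure_eq_sum_fiber P (fun ω => (A ω, J ω)) (hA.prodMk hJ)
    (hT (measurableSet_singleton e))]
  have hfiber : ∀ (f : Fin n → Fin n → Bool) (j : Fin n),
      ((fun ω => tmap half i (A ω) (J ω)) ⁻¹' {e}) ∩ ((fun ω => (A ω, J ω)) ⁻¹' {(f, j)})
        = if tmap half i f j = e then {ω | A ω = f ∧ J ω = j} else ∅ := by
    intro f j
    by_cases h : tmap half i f j = e
    · rw [if_pos h]
      ext ω
      simp only [Set.mem_inter_iff, Set.mem_preimage, Set.mem_singleton_iff, Prod.mk.injEq,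
        Set.mem_setOf_eq]
      constructor
      · rintro ⟨-, h1, h2⟩; exact ⟨h1, h2⟩
      · rintro ⟨h1, h2⟩; exact ⟨by rw [h1, h2, h], h1, h2⟩
    · rw [if_neg h]
      ext ω
      simp only [Set.mem_inter_iff, Set.mem_preimage, Set.mem_singleton_iff, Prod.mk.injEq,
        Set.mem_empty_iff_false, iff_false]
      rintro ⟨h0, h1, h2⟩
      rw [h1, h2] at h0
      exact h h0
  rw [Fintype.sum_prod_type]
  simp only [hfiber, apply_ite P, measure_empty]
  rw [Finset.sum_comm]
  -- case analysis on e
  by_cases hbe : bulbOn e i = true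
  · by_cases heV : e ∈ V
    · -- main case
      rw [if_pos hbe, if_pos heV]
      have hinner : ∀ j : Fin n,
          (∑ f : Fin n → Fin n → Bool,
            if tmap half i f j = e then P {ω | A ω = f ∧ J ω = j} else 0)
          = if e half j = !(e half i) then 2 * (N⁻¹ * n2⁻¹) else 0 := by
        intro j
        by_cases hj : e half j = !(e half i)
        · rw [if_pos hj]
          have hji : j ≠ i := by intro hh; rw [hh] at hj; simp at hj
          set g := swapRow half i j e with hg
          have hgV : g ∈ V := swapRow_mem half i j heV
          have hbg : bulbOn g i = false := by
            simp [hg, bulbOn_swapRow hji e hj, hbe]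
          have hge : e ≠ g := by
            intro hh; rw [← hh, hbe] at hbg; exact absurd hbg (by simp)
          have hte : tmap half i e j = e := tmap_pos j hbe
          have htg : tmap half i g j = e := by
            rw [tmap_neg j hbg, hg, swapRow_invol]
          have hzero : ∀ f ∈ (Finset.univ : Finset (Fin n → Fin n → Bool)),
              f ∉ ({e, g} : Finset (Fin n → Fin n → Bool)) →
              (if tmap half i f j = e then P {ω | A ω = f ∧ J ω = j} else 0) = 0 := by
            intro f _ hf
            by_cases htf : tmap half i f j = e
            · rw [if_pos htf]
              by_cases hcond : f half j = !(f half i)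
              · exfalso
                apply hf
                cases hbf : bulbOn f i
                · rw [tmap_neg j hbf] at htf
                  have : f = g := by rw [hg, ← htf, swapRow_invol]
                  rw [Finset.mem_insert, Finset.mem_singleton]
                  right; exact this
                · rw [tmap_pos j hbf] at htf
                  rw [Finset.mem_insert]; left; exact htf
              · rw [hJdist f j, if_neg hcond, mul_zero]
            · rw [if_neg htf]
          rw [← Finset.sum_subset (Finset.subset_univ ({e, g} : Finset _)) hzero,
            Finset.sum_pair hge, if_pos hte, if_pos htg, hPAJ e j heV, hPAJ g j hgV,
            if_pos hj]
          have hcondg : g half j = !(g half i) := by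
            have h1 : g half j = e half i := by
              rw [hg, swapRow_apply, if_pos rfl, Equiv.swap_apply_right]
            have h2 : g half i = e half j := by
              rw [hg, swapRow_apply, if_pos rfl, Equiv.swap_apply_left]
            rw [h1, h2, hj, Bool.not_not]
          rw [if_pos hcondg, two_mul]
        · rw [if_neg hj]
          apply Finset.sum_eq_zero
          intro f _
          by_cases htf : tmap half i f j = e
          · rw [if_pos htf]
            by_cases hcond : f half j = !(f half i)
            · exfalso
              apply hj
              cases hbf : bulbOn f i
              · rw [tmap_neg j hbf] at htf
                have h1 : e half j = f half i := by
                  rw [← htf, swapRow_apply, if_pos rfl, Equiv.swap_apply_right]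
                have h2 : e half i = f half j := by
                  rw [← htf, swapRow_apply, if_pos rfl, Equiv.swap_apply_left]
                rw [h1, h2, hcond, Bool.not_not]
              · rw [tmap_pos j hbf] at htf
                rw [← htf]; exact hcond
            · rw [hJdist f j, if_neg hcond, mul_zero]
          · rw [if_neg htf]
      rw [Finset.sum_congr rfl (fun j _ => hinner j), ← Finset.sum_filter,
        Finset.sum_const, count_row hne hhalf heV (!(e half i)), nsmul_eq_mul, ← hn2def,
        show n2 * (2 * (N⁻¹ * n2⁻¹)) = (n2 * n2⁻¹) * (2 * N⁻¹) by ring,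
        ENNReal.mul_inv_cancel hn2ne hn2top, one_mul]
    · -- e not valid
      rw [if_pos hbe, if_neg heV, mul_zero]
      apply Finset.sum_eq_zero
      intro j _
      apply Finset.sum_eq_zero
      intro f _
      by_cases htf : tmap half i f j = e
      · rw [if_pos htf]
        by_cases hfV : f ∈ V
        · exfalso
          apply heV
          rw [← htf]
          cases hbf : bulbOn f i
          · rw [tmap_neg j hbf]; exact swapRow_mem half i j hfV
          · rw [tmap_pos j hbf]; exact hfV
        · exact hPAJ0 f j hfV
      · rw [if_neg htf]
  · -- bulb i off in e
    rw [if_neg hbe, mul_zero]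
    apply Finset.sum_eq_zero
    intro j _
    apply Finset.sum_eq_zero
    intro f _
    by_cases htf : tmap half i f j = e
    · rw [if_pos htf]
      by_cases hcond : f half j = !(f half i)
      · exfalso
        apply hbe
        cases hbf : bulbOn f i
        · have hji : j ≠ i := by intro hh; rw [hh] at hcond; simp at hcond
          rw [tmap_neg j hbf] at htf
          rw [← htf, bulbOn_swapRow hji f hcond, hbf]
          simp
        · rw [tmap_pos j hbf] at htf
          rw [← htf]; exact hbf
      · rw [hJdist f j, if_neg hcond, mul_zero]
    · rw [if_neg htf]
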